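/- arXiv:1305.1265 — 2 statements merged into one kernel-verified Lean document; each statement's English description precedes it below -/
import Mathlib

section
/- Let d ≥ 4 be an integer, set k = d−1, let c > 0 be a real number, and let i be an integer with 3 ≤ i ≤ d−1. Then −i(i−2)·(2d−3)(3d−2) + (i(i−1)/2)·3(d−2)(4d−3) + γ_i/c > (6d² + d − 6)·i·(2d−2−i)/(4d−3). -/
open Finset

/-- The coefficient `γ_i` (for `k ≥ 2`, `i ≥ 3`) from the Eisenbud–Harris
formula for the Petri divisor. -/
def gammaEH (k i : ℕ) : ℚ :=
  ((i : ℚ) - 1) * ((i : ℚ) - 2) * (Nat.factorial (2 * k - 2)) /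
      ((Nat.factorial k) * (Nat.factorial (k - 1)))
    - ∑ l ∈ Finset.Icc 1 ((i - 2) / 2),
        2 * ((i : ℚ) - 1 - 2 * (l : ℚ)) * (Nat.factorial (2 * l)) *
            (Nat.factorial (2 * k - 2 - 2 * l)) /
          ((Nat.factorial (l + 1)) * (Nat.factorial l) * (Nat.factorial (k - l)) *
            (Nat.factorial (k - l + 1)))


section AuxEH
open Finset Nat

lemma vander (l m : ℕ) : (2*l).choose l * (2*m).choose m ≤ (2*l+2*m).choose (l+m) := by
  rw [Nat.add_choose_eq]
  have hmem : ((l, m) : ℕ × ℕ) ∈ Finset.HasAntidiagonal.antidiagonal (l+m) := by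
    simp [Finset.HasAntidiagonal.mem_antidiagonal]
  exact Finset.single_le_sum (f := fun ij : ℕ × ℕ => (2*l).choose ij.1 * (2*m).choose ij.2)
    (fun _ _ => Nat.zero_le _) hmem

lemma factA (l m : ℕ) :
    (2*l)! * (2*m)! * ((l+m)! * (l+m)!) ≤ (2*l+2*m)! * (l ! * l ! * (m ! * m !)) := by
  have hl : (2*l).choose l * l ! * l ! = (2*l)! := by
    have := Nat.choose_mul_factorial_mul_factorial (show l ≤ 2*l by omega)
    simpa [show 2*l - l = l by omega] using this
  have hm : (2*m).choose m * m ! * m ! = (2*m)! := by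
    have := Nat.choose_mul_factorial_mul_factorial (show m ≤ 2*m by omega)
    simpa [show 2*m - m = m by omega] using this
  have hc : (2*l+2*m).choose (l+m) * (l+m)! * (l+m)! = (2*l+2*m)! := by
    have := Nat.choose_mul_factorial_mul_factorial (show l+m ≤ 2*l+2*m by omega)
    simpa [show 2*l+2*m - (l+m) = l+m by omega] using this
  calc (2*l)! * (2*m)! * ((l+m)! * (l+m)!)
      = ((2*l).choose l * (2*m).choose m) * (l ! * l ! * (m ! * m !) * ((l+m)! * (l+m)!)) := by
        rw [← hl, ← hm]; ring
    _ ≤ (2*l+2*m).choose (l+m) * (l ! * l ! * (m ! * m !) * ((l+m)! * (l+m)!)) :=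
        Nat.mul_le_mul_right _ (vander l m)
    _ = (2*l+2*m)! * (l ! * l ! * (m ! * m !)) := by rw [← hc]; ring

lemma keyFact (l m : ℕ) :
    (l+m+1)! * (l+m)! * ((2*l)! * (2*m)!) ≤
      (l+1)! * l ! * ((m+1)! * (m+2)!) * (2*l+2*m)! := by
  have e1 : (l+m+1)! = (l+m+1) * (l+m)! := rfl
  have e2 : (l+1)! = (l+1) * l ! := rfl
  have e3 : (m+1)! = (m+1) * m ! := rfl
  have e4 : (m+2)! = (m+2) * ((m+1) * m !) := rfl
  rw [e1, e2, e3, e4]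
  have hco : l+m+1 ≤ (l+1) * ((m+1) * ((m+2) * (m+1))) := by
    calc l+m+1 ≤ (l+1) * (m+1) := by nlinarith
      _ ≤ (l+1) * ((m+1) * ((m+2) * (m+1))) :=
          Nat.mul_le_mul_left _ (Nat.le_mul_of_pos_right _ (by positivity))
  calc (l+m+1) * (l+m)! * (l+m)! * ((2*l)! * (2*m)!)
      = (l+m+1) * ((2*l)! * (2*m)! * ((l+m)! * (l+m)!)) := by ring
    _ ≤ ((l+1) * ((m+1) * ((m+2) * (m+1)))) * ((2*l+2*m)! * (l ! * l ! * (m ! * m !))) :=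
        Nat.mul_le_mul hco (factA l m)
    _ = (l+1) * l ! * l ! * ((m+1) * m ! * ((m+2) * ((m+1) * m !))) * (2*l+2*m)! := by ring

lemma gamma_nonneg (k i : ℕ) (hk : 3 ≤ k) (h3 : 3 ≤ i) (hik : i ≤ k) :
    0 ≤ gammaEH k i := by
  have hi3 : (3:ℚ) ≤ (i:ℚ) := by exact_mod_cast h3
  set C : ℚ := (Nat.factorial (2*k-2) : ℚ) / ((Nat.factorial k) * (Nat.factorial (k-1))) with hCdef
  have hC : 0 ≤ C := by positivity
  -- per-term bound
  have hterm : ∀ l ∈ Finset.Icc 1 ((i-2)/2),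
      2 * ((i : ℚ) - 1 - 2 * (l : ℚ)) * (Nat.factorial (2 * l)) *
            (Nat.factorial (2 * k - 2 - 2 * l)) /
          ((Nat.factorial (l + 1)) * (Nat.factorial l) * (Nat.factorial (k - l)) *
            (Nat.factorial (k - l + 1)))
        ≤ 2 * ((i:ℚ) - 3) * C := by
    intro l hl
    rw [Finset.mem_Icc] at hl
    obtain ⟨hl1, hl2⟩ := hl
    have h2l : 2*l ≤ i - 2 := by omega
    have hlk : l ≤ k - 2 := by omega
    set m := k - 1 - l with hm
    have e1 : 2*k - 2 - 2*l = 2*m := by omega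
    have e2 : k - l = m + 1 := by omega
    have e3 : k - l + 1 = m + 2 := by omega
    have e4 : 2*k - 2 = 2*l + 2*m := by omega
    have e5 : k = l + m + 1 := by omega
    have e6 : k - 1 = l + m := by omega
    rw [e1, e3, e2, hCdef, e4, e6, e5]
    rw [mul_div_assoc', div_le_div_iff₀ (by positivity) (by positivity)]
    have hco : 2 * ((i:ℚ) - 1 - 2*(l:ℚ)) ≤ 2 * ((i:ℚ) - 3) := by
      have : (1:ℚ) ≤ (l:ℚ) := by exact_mod_cast hl1
      linarith
    have hco0 : 0 ≤ 2 * ((i:ℚ) - 1 - 2*(l:ℚ)) := by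
      have : (l:ℚ) ≤ ((i:ℚ) - 2)/2 := by
        have h2l' : (2*l : ℚ) ≤ ((i:ℚ) - 2) := by
          have : ((2*l : ℕ) : ℚ) ≤ ((i - 2 : ℕ) : ℚ) := by exact_mod_cast h2l
          push_cast [Nat.cast_sub (by omega : 2 ≤ i)] at this ⊢
          linarith [this]
        linarith
      linarith
    have hkey : ((Nat.factorial (l+m+1) * Nat.factorial (l+m) *
          (Nat.factorial (2*l) * Nat.factorial (2*m)) : ℕ) : ℚ)
        ≤ ((Nat.factorial (l+1) * Nat.factorial l *
          (Nat.factorial (m+1) * Nat.factorial (m+2)) * Nat.factorial (2*l+2*m) : ℕ) : ℚ) := by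
      exact_mod_cast keyFact l m
    push_cast at hkey
    calc 2 * ((i:ℚ) - 1 - 2*(l:ℚ)) * (Nat.factorial (2*l)) * (Nat.factorial (2*m)) *
          ((Nat.factorial (l+m+1)) * (Nat.factorial (l+m)))
        = (2 * ((i:ℚ) - 1 - 2*(l:ℚ))) * ((Nat.factorial (l+m+1)) * (Nat.factorial (l+m)) *
            ((Nat.factorial (2*l)) * (Nat.factorial (2*m)))) := by ring
      _ ≤ (2 * ((i:ℚ) - 3)) * ((Nat.factorial (l+1)) * (Nat.factorial l) *
            ((Nat.factorial (m+1)) * (Nat.factorial (m+2))) * (Nat.factorial (2*l+2*m))) := by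
          apply mul_le_mul hco hkey (by positivity) (by linarith)
      _ = 2 * ((i:ℚ) - 3) * (Nat.factorial (2*l+2*m)) *
            ((Nat.factorial (l+1)) * (Nat.factorial l) * (Nat.factorial (m+1)) *
              (Nat.factorial (m+2))) := by ring
  have hsum := Finset.sum_le_card_nsmul _ _ _ hterm
  rw [Nat.card_Icc] at hsum
  simp only [nsmul_eq_mul] at hsum
  have hcard : (((i-2)/2 + 1 - 1 : ℕ) : ℚ) ≤ ((i:ℚ) - 2)/2 := by
    have h1 : ((i-2)/2 + 1 - 1 : ℕ) = (i-2)/2 := by omega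
    rw [h1]
    calc (((i-2)/2 : ℕ) : ℚ) ≤ ((i-2 : ℕ):ℚ) / ((2:ℕ):ℚ) := Nat.cast_div_le
      _ = ((i:ℚ) - 2)/2 := by push_cast [Nat.cast_sub (by omega : 2 ≤ i)]; norm_num
  have hS : ∑ l ∈ Finset.Icc 1 ((i-2)/2),
        2 * ((i : ℚ) - 1 - 2 * (l : ℚ)) * (Nat.factorial (2 * l)) *
            (Nat.factorial (2 * k - 2 - 2 * l)) /
          ((Nat.factorial (l + 1)) * (Nat.factorial l) * (Nat.factorial (k - l)) *
            (Nat.factorial (k - l + 1)))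
      ≤ ((i:ℚ) - 1) * ((i:ℚ) - 2) * C := by
    calc _ ≤ (((i-2)/2 + 1 - 1 : ℕ) : ℚ) * (2 * ((i:ℚ) - 3) * C) := hsum
      _ ≤ (((i:ℚ) - 2)/2) * (2 * ((i:ℚ) - 3) * C) := by
          exact mul_le_mul_of_nonneg_right hcard (mul_nonneg (by linarith) hC)
      _ = ((i:ℚ) - 2) * ((i:ℚ) - 3) * C := by ring
      _ ≤ ((i:ℚ) - 1) * ((i:ℚ) - 2) * C := by nlinarith
  have hP : ((i : ℚ) - 1) * ((i : ℚ) - 2) * (Nat.factorial (2 * k - 2)) /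
      ((Nat.factorial k) * (Nat.factorial (k - 1))) = ((i:ℚ) - 1) * ((i:ℚ) - 2) * C := by
    rw [hCdef]; ring
  unfold gammaEH
  rw [hP]
  linarith

end AuxEH

theorem stmt_2 (d : ℕ) (hd : 4 ≤ d) (c : ℝ) (hc : 0 < c)
    (i : ℕ) (h3 : 3 ≤ i) (hi : i ≤ d - 1) :
    -(i : ℝ) * ((i : ℝ) - 2) * ((2 * (d : ℝ) - 3) * (3 * (d : ℝ) - 2))
        + ((i : ℝ) * ((i : ℝ) - 1) / 2) * (3 * ((d : ℝ) - 2) * (4 * (d : ℝ) - 3))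
        + (gammaEH (d - 1) i : ℝ) / c
      > (6 * (d : ℝ) ^ 2 + (d : ℝ) - 6) * (i : ℝ) * (2 * (d : ℝ) - 2 - (i : ℝ))
          / (4 * (d : ℝ) - 3) := by
  have hk3 : 3 ≤ d - 1 := by omega
  have hik : i ≤ d - 1 := hi
  have hg : (0:ℝ) ≤ (gammaEH (d-1) i : ℝ) := by
    exact_mod_cast gamma_nonneg (d-1) i hk3 h3 hik
  have hgc : (0:ℝ) ≤ (gammaEH (d-1) i : ℝ) / c := div_nonneg hg hc.le
  have hD : (4:ℝ) ≤ (d:ℝ) := by exact_mod_cast hd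
  have hx3 : (3:ℝ) ≤ (i:ℝ) := by exact_mod_cast h3
  have hxD : (i:ℝ) ≤ (d:ℝ) - 1 := by
    have : ((i:ℕ):ℝ) ≤ ((d-1:ℕ):ℝ) := by exact_mod_cast hi
    rwa [Nat.cast_sub (by omega : 1 ≤ d), Nat.cast_one] at this
  have h43 : (0:ℝ) < 4 * (d:ℝ) - 3 := by linarith
  rw [gt_iff_lt, div_lt_iff₀ h43]
  have key : (6 * (d:ℝ) ^ 2 + (d:ℝ) - 6) * (i:ℝ) * (2 * (d:ℝ) - 2 - (i:ℝ))
      < (-(i : ℝ) * ((i : ℝ) - 2) * ((2 * (d : ℝ) - 3) * (3 * (d : ℝ) - 2))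
        + ((i : ℝ) * ((i : ℝ) - 1) / 2) * (3 * ((d : ℝ) - 2) * (4 * (d : ℝ) - 3)))
        * (4 * (d:ℝ) - 3) := by
    nlinarith [mul_nonneg (mul_nonneg (by linarith : (0:ℝ) ≤ (i:ℝ) - 3)
        (by linarith : (0:ℝ) ≤ (d:ℝ) - 1 - (i:ℝ))) (by linarith : (0:ℝ) ≤ (d:ℝ) - 4),
      mul_nonneg (by linarith : (0:ℝ) ≤ (i:ℝ) - 3) (by linarith : (0:ℝ) ≤ (d:ℝ) - 1 - (i:ℝ)),
      mul_nonneg (by linarith : (0:ℝ) ≤ (i:ℝ) - 3) (by linarith : (0:ℝ) ≤ (d:ℝ) - 4),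
      mul_nonneg (by linarith : (0:ℝ) ≤ (d:ℝ) - 1 - (i:ℝ)) (by linarith : (0:ℝ) ≤ (d:ℝ) - 4),
      sq_nonneg ((i:ℝ) - 3), sq_nonneg ((d:ℝ) - 1 - (i:ℝ)), sq_nonneg ((d:ℝ) - 4)]
  nlinarith [key, hgc, h43]
end

section
/- Let k ≥ 6 be an integer and let h be an integer with 2 ≤ h ≤ ⌊(k−2)/2⌋. Then (2k−2)!/(k!·(k−1)!) ≥ (2h)!·(2k−2−2h)!/((h+1)!·h!·(k−h)!·(k−h+1)!), as rational numbers. -/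
open Nat

lemma fact_two_mul_eq (n : ℕ) :
    Nat.factorial (2 * n) = (n + 1) * catalan n * (Nat.factorial n * Nat.factorial n) := by
  have h1 : (n + 1) * catalan n = Nat.centralBinom n := succ_mul_catalan_eq_centralBinom n
  have h2 : Nat.choose (2 * n) n * Nat.factorial n * Nat.factorial (2 * n - n)
      = Nat.factorial (2 * n) :=
    Nat.choose_mul_factorial_mul_factorial (by omega)
  have h3 : 2 * n - n = n := by omega
  rw [h1, Nat.centralBinom]
  rw [h3] at h2
  rw [← h2]; ring

lemma catalan_mul_le (h m : ℕ) : catalan h * catalan m ≤ catalan (h + m + 1) := by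
  rw [catalan_succ]
  have := Finset.single_le_sum (f := fun i : Fin (h + m).succ => catalan i * catalan (h + m - i))
    (fun i _ => Nat.zero_le _) (Finset.mem_univ (⟨h, by omega⟩ : Fin (h + m).succ))
  simpa using this

lemma catalan_succ_le (s : ℕ) : (s + 2) * catalan (s + 1) = 2 * (2 * s + 1) * catalan s := by
  have h1 := succ_mul_centralBinom_succ s
  have h2 := succ_mul_catalan_eq_centralBinom (s + 1)
  have h3 := succ_mul_catalan_eq_centralBinom s
  have : (s + 1) * ((s + 2) * catalan (s + 1)) = (s + 1) * (2 * (2 * s + 1) * catalan s) := by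
    calc (s + 1) * ((s + 2) * catalan (s + 1)) = (s + 1) * ((s + 2) * catalan (s + 1)) := rfl
      _ = (s + 1) * Nat.centralBinom (s + 1) := by rw [← h2]
      _ = 2 * (2 * s + 1) * Nat.centralBinom s := h1
      _ = 2 * (2 * s + 1) * ((s + 1) * catalan s) := by rw [h3]
      _ = (s + 1) * (2 * (2 * s + 1) * catalan s) := by ring
  exact Nat.eq_of_mul_eq_mul_left (by omega) this

lemma key_catalan (h m : ℕ) (hm : 1 ≤ m) :
    catalan h * catalan m ≤ (m + 1) * (m + 2) * catalan (h + m) := by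
  set s := h + m with hs
  have h1 : (s + 2) * (catalan h * catalan m) ≤ (s + 2) * catalan (s + 1) :=
    Nat.mul_le_mul_left _ (catalan_mul_le h m)
  rw [catalan_succ_le s] at h1
  have h2 : 2 * (2 * s + 1) * catalan s ≤ (s + 2) * ((m + 1) * (m + 2) * catalan s) := by
    have h6' : 2 * 3 ≤ (m + 1) * (m + 2) := Nat.mul_le_mul (by omega) (by omega)
    have h6 : 6 ≤ (m + 1) * (m + 2) := by omega
    have : 2 * (2 * s + 1) ≤ (s + 2) * ((m + 1) * (m + 2)) := by
      calc 2 * (2 * s + 1) ≤ (s + 2) * 6 := by omega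
        _ ≤ (s + 2) * ((m + 1) * (m + 2)) := Nat.mul_le_mul_left _ h6
    calc 2 * (2 * s + 1) * catalan s ≤ (s + 2) * ((m + 1) * (m + 2)) * catalan s :=
          Nat.mul_le_mul_right _ this
      _ = (s + 2) * ((m + 1) * (m + 2) * catalan s) := by ring
  exact Nat.le_of_mul_le_mul_left (h1.trans h2) (by omega)

lemma key_nat (h m : ℕ) (hm : 1 ≤ m) :
    Nat.factorial (2 * h) * Nat.factorial (2 * m) *
      (Nat.factorial (h + m + 1) * Nat.factorial (h + m)) ≤
    Nat.factorial (2 * (h + m)) *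
      (Nat.factorial (h + 1) * Nat.factorial h * Nat.factorial (m + 1) *
        Nat.factorial (m + 2)) := by
  have Eh := fact_two_mul_eq h
  have Em := fact_two_mul_eq m
  have Es := fact_two_mul_eq (h + m)
  have F1 : Nat.factorial (h + 1) = (h + 1) * Nat.factorial h := Nat.factorial_succ h
  have F2 : Nat.factorial (m + 1) = (m + 1) * Nat.factorial m := Nat.factorial_succ m
  have F3 : Nat.factorial (m + 2) = (m + 2) * ((m + 1) * Nat.factorial m) := by
    rw [Nat.factorial_succ, Nat.factorial_succ]
  have F4 : Nat.factorial (h + m + 1) = (h + m + 1) * Nat.factorial (h + m) :=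
    Nat.factorial_succ (h + m)
  set K := (h + 1) * (m + 1) * (h + m + 1) *
      (Nat.factorial h * Nat.factorial h * (Nat.factorial m * Nat.factorial m) *
        (Nat.factorial (h + m) * Nat.factorial (h + m))) with hK
  calc Nat.factorial (2 * h) * Nat.factorial (2 * m) *
        (Nat.factorial (h + m + 1) * Nat.factorial (h + m))
      = (catalan h * catalan m) * K := by rw [Eh, Em, F4, hK]; ring
    _ ≤ ((m + 1) * (m + 2) * catalan (h + m)) * K :=
        Nat.mul_le_mul_right _ (key_catalan h m hm)
    _ = Nat.factorial (2 * (h + m)) *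
        (Nat.factorial (h + 1) * Nat.factorial h * Nat.factorial (m + 1) *
          Nat.factorial (m + 2)) := by rw [Es, F1, F2, F3, hK]; ring

theorem stmt_8 (k : ℕ) (hk : 6 ≤ k) (h : ℕ) (h2 : 2 ≤ h) (hh : h ≤ (k - 2) / 2) :
    ((Nat.factorial (2 * k - 2)) : ℚ) / ((Nat.factorial k) * (Nat.factorial (k - 1)))
      ≥ (Nat.factorial (2 * h)) * (Nat.factorial (2 * k - 2 - 2 * h)) /
          ((Nat.factorial (h + 1)) * (Nat.factorial h) * (Nat.factorial (k - h)) *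
            (Nat.factorial (k - h + 1))) := by
  set m := k - 1 - h with hm
  have hhk : h ≤ (k - 2) / 2 := hh
  have e1 : 2 * k - 2 = 2 * (h + m) := by omega
  have e2 : 2 * k - 2 - 2 * h = 2 * m := by omega
  have e3 : k - h = m + 1 := by omega
  have e4 : k - h + 1 = m + 2 := by omega
  have e5 : k = h + m + 1 := by omega
  have e6 : k - 1 = h + m := by omega
  have hm1 : 1 ≤ m := by omega
  rw [ge_iff_le, div_le_div_iff₀ (by positivity) (by positivity)]
  rw [e2, e1, e4, e3, e6, e5]
  have := key_nat h m hm1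
  push_cast
  calc ((Nat.factorial (2 * h) : ℚ) * Nat.factorial (2 * m)) *
        (Nat.factorial (h + m + 1) * Nat.factorial (h + m))
      ≤ (Nat.factorial (2 * (h + m)) : ℚ) *
        (Nat.factorial (h + 1) * Nat.factorial h * Nat.factorial (m + 1) *
          Nat.factorial (m + 2)) := by exact_mod_cast this
end
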